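/- For θ_n = (cos(2πn/N), sin(2πn/N)), ω, ω̂ > 0 and x, z ∈ R^2, the quantity |(1/N) Σ_{n=1}^N exp(i θ_n · (ω̂ x − ω z))|^2 converges to J_0(ω̂ |x − (ω/ω̂) z|)^2 as N → ∞. -/

import Mathlib

open Real Filter

open intervalIntegral in
lemma riemann_sum_tendsto (f : ℝ → ℂ) (hf : Continuous f) :
    Tendsto (fun N : ℕ => (N:ℝ)⁻¹ • ∑ n ∈ Finset.range N, f (2 * π * (n + 1) / N))
      atTop (nhds ((2*π)⁻¹ • ∫ t in (0:ℝ)..(2*π), f t)) := by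
  rw [Metric.tendsto_atTop]
  intro ε hε
  have hπ : (0:ℝ) < 2*π := by positivity
  have hu := (isCompact_Icc (a := (0:ℝ)) (b := 2*π)).uniformContinuousOn_of_continuous
    hf.continuousOn
  rw [Metric.uniformContinuousOn_iff] at hu
  obtain ⟨δ, hδ, hδ'⟩ := hu (ε/2) (by positivity)
  obtain ⟨M, hM⟩ := exists_nat_gt (2*π/δ)
  refine ⟨M + 1, fun N hN => ?_⟩
  have hN1 : 1 ≤ N := le_trans (Nat.le_add_left 1 M) hN
  have hNpos : (0:ℝ) < N := by exact_mod_cast hN1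
  have hMN : (2*π/δ : ℝ) < N := lt_of_lt_of_le hM (by exact_mod_cast le_trans (Nat.le_succ M) hN)
  have hstep : 2*π/N < δ := by
    rw [div_lt_iff₀ hδ] at hMN
    rw [div_lt_iff₀ hNpos]
    linarith
  set a : ℕ → ℝ := fun k => 2*π*k/N with ha
  have hmono : ∀ k : ℕ, a k ≤ a (k+1) := by
    intro k
    simp only [ha]
    gcongr
    all_goals push_cast; nlinarith [pi_pos]
  have hlen : ∀ k : ℕ, a (k+1) - a k = 2*π/N := by
    intro k
    simp only [ha]
    push_cast
    field_simp
    ring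
  have hint : ∀ k : ℕ, IntervalIntegrable f MeasureTheory.volume (a k) (a (k+1)) :=
    fun k => hf.intervalIntegrable _ _
  have ha0 : a 0 = 0 := by simp [ha]
  have haN : a N = 2*π := by
    simp only [ha]
    field_simp
  have hsplit : ∑ n ∈ Finset.range N, ∫ t in a n..a (n+1), f t = ∫ t in (0:ℝ)..(2*π), f t := by
    rw [← ha0, ← haN]
    exact intervalIntegral.sum_integral_adjacent_intervals (fun k _ => hint k)
  have hsample : ∀ n : ℕ, f (2 * π * (n + 1) / N) = f (a (n+1)) := by
    intro n; simp only [ha]; push_cast; ring_nf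
  rw [dist_eq_norm]
  have hkey : (N:ℝ)⁻¹ • ∑ n ∈ Finset.range N, f (2 * π * (n + 1) / N)
      - (2*π)⁻¹ • ∫ t in (0:ℝ)..(2*π), f t
      = (2*π)⁻¹ • ∑ n ∈ Finset.range N,
          ((2*π/N) • f (a (n+1)) - ∫ t in a n..a (n+1), f t) := by
    rw [Finset.sum_sub_distrib, smul_sub, hsplit]
    congr 1
    rw [Finset.smul_sum, Finset.smul_sum]
    refine Finset.sum_congr rfl fun n _ => ?_
    rw [hsample n, smul_smul]
    congr 1
    field_simp
  rw [hkey, norm_smul]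
  have hbound : ∀ n ∈ Finset.range N,
      ‖(2*π/N) • f (a (n+1)) - ∫ t in a n..a (n+1), f t‖ ≤ (ε/2) * (2*π/N) := by
    intro n hn
    have hn' : n < N := Finset.mem_range.mp hn
    have hc : ((2*π/N) • f (a (n+1)) : ℂ) = ∫ t in a n..a (n+1), f (a (n+1)) := by
      rw [intervalIntegral.integral_const, hlen n]
    rw [hc, ← intervalIntegral.integral_sub intervalIntegrable_const (hint n)]
    have hIcc : ∀ t ∈ Set.Icc (a n) (a (n+1)), t ∈ Set.Icc (0:ℝ) (2*π) := by
      intro t ht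
      constructor
      · have : (0:ℝ) ≤ a n := by simp only [ha]; positivity
        linarith [ht.1]
      · have : a (n+1) ≤ 2*π := by
          simp only [ha]
          rw [div_le_iff₀ hNpos]
          have : (n:ℝ) + 1 ≤ N := by exact_mod_cast hn'
          push_cast
          nlinarith
        linarith [ht.2]
    have hB : ∀ t ∈ Set.uIoc (a n) (a (n+1)), ‖f (a (n+1)) - f t‖ ≤ ε/2 := by
      intro t ht
      rw [Set.uIoc_of_le (hmono n)] at ht
      have ht' : t ∈ Set.Icc (a n) (a (n+1)) := ⟨ht.1.le, ht.2⟩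
      have hd : dist (a (n+1)) t < δ := by
        rw [Real.dist_eq, abs_of_nonneg (by linarith [ht.2])]
        have := hlen n
        linarith [ht.1, hstep]
      have := hδ' (a (n+1)) (hIcc _ (Set.right_mem_Icc.mpr (hmono n))) t (hIcc t ht') hd
      rw [dist_eq_norm] at this
      exact this.le
    have := intervalIntegral.norm_integral_le_of_norm_le_const hB
    rwa [hlen n, abs_of_pos (by positivity)] at this
  calc ‖(2*π)⁻¹‖ * ‖∑ n ∈ Finset.range N,
          ((2*π/N) • f (a (n+1)) - ∫ t in a n..a (n+1), f t)‖
      ≤ (2*π)⁻¹ * (N * ((ε/2) * (2*π/N))) := by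
        rw [Real.norm_eq_abs, abs_of_pos (by positivity)]
        refine mul_le_mul_of_nonneg_left ?_ (by positivity)
        refine le_trans (norm_sum_le _ _) ?_
        refine le_trans (Finset.sum_le_card_nsmul _ _ _ hbound) ?_
        simp [Finset.card_range, nsmul_eq_mul]
    _ = ε/2 := by field_simp
    _ < ε := by linarith

open intervalIntegral in
lemma sin_int_zero (r : ℝ) :
    ∫ φ in (0:ℝ)..(2*π), Real.sin (r * Real.cos φ) = 0 := by
  have hc : Continuous fun φ => Real.sin (r * Real.cos φ) := by continuity
  have h1 : ∫ φ in (0:ℝ)..(2*π), Real.sin (r * Real.cos φ)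
      = (∫ φ in (0:ℝ)..π, Real.sin (r * Real.cos φ))
        + ∫ φ in π..(2*π), Real.sin (r * Real.cos φ) :=
    (intervalIntegral.integral_add_adjacent_intervals
      (hc.intervalIntegrable _ _) (hc.intervalIntegrable _ _)).symm
  have h2 : ∫ φ in π..(2*π), Real.sin (r * Real.cos φ)
      = ∫ φ in (0:ℝ)..π, Real.sin (r * Real.cos (φ + π)) := by
    rw [intervalIntegral.integral_comp_add_right (fun φ => Real.sin (r * Real.cos φ)) π]
    norm_num [two_mul]
  have h3 : ∀ φ : ℝ, Real.sin (r * Real.cos (φ + π)) = -Real.sin (r * Real.cos φ) := by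
    intro φ
    rw [Real.cos_add_pi, mul_neg, Real.sin_neg]
  simp only [h3] at h2
  rw [intervalIntegral.integral_neg] at h2
  linarith [h1, h2]

lemma exp_int_eq (r : ℝ) :
    ∫ φ in (0:ℝ)..(2*π), Complex.exp (Complex.I * (r * Real.cos φ))
      = ((∫ φ in (0:ℝ)..(2*π), Real.cos (r * Real.cos φ) : ℝ) : ℂ) := by
  have h1 : ∀ φ : ℝ, Complex.exp (Complex.I * (r * Real.cos φ))
      = ((Real.cos (r * Real.cos φ) : ℝ) : ℂ) + ((Real.sin (r * Real.cos φ) : ℝ) : ℂ) * Complex.I := by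
    intro φ
    rw [mul_comm, show ((r : ℂ) * (Real.cos φ : ℂ)) = ((r * Real.cos φ : ℝ) : ℂ) by push_cast; ring,
      Complex.exp_mul_I, Complex.ofReal_cos, Complex.ofReal_sin]
  simp only [h1]
  have hcc : Continuous fun φ : ℝ => ((Real.cos (r * Real.cos φ) : ℝ) : ℂ) := by continuity
  have hcs : Continuous fun φ : ℝ => ((Real.sin (r * Real.cos φ) : ℝ) : ℂ) * Complex.I := by continuity
  rw [intervalIntegral.integral_add (hcc.intervalIntegrable _ _) (hcs.intervalIntegrable _ _),
    intervalIntegral.integral_mul_const, intervalIntegral.integral_ofReal,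
    intervalIntegral.integral_ofReal, sin_int_zero]
  simp

lemma shift_int (r α : ℝ) :
    ∫ φ in (0:ℝ)..(2*π), Complex.exp (Complex.I * (r * Real.cos (φ - α)))
      = ∫ φ in (0:ℝ)..(2*π), Complex.exp (Complex.I * (r * Real.cos φ)) := by
  rw [intervalIntegral.integral_comp_sub_right (fun φ => Complex.exp (Complex.I * (r * Real.cos φ))) α]
  have hper : Function.Periodic (fun φ : ℝ => Complex.exp (Complex.I * (r * Real.cos φ))) (2*π) := by
    intro φ; simp [Real.cos_add_two_pi]
  have h := hper.intervalIntegral_add_eq (-α) 0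
  simp only [zero_add] at h
  rw [show (0:ℝ) - α = -α by ring, show 2*π - α = -α + 2*π by ring]
  exact h

/-- Bessel function of the first kind of order zero, via its integral representation. -/
noncomputable def J0 (r : ℝ) : ℝ :=
  (1 / (2 * π)) * ∫ φ in (0:ℝ)..(2 * π), Real.cos (r * Real.cos φ)

/-- For the equidistributed directions `θ_n = (cos (2πn/N), sin (2πn/N))`, the quantity
`|(1/N) Σ_n exp (i θ_n · (ω̂x − ωz))|²` converges to `J₀(ω̂ ‖x − (ω/ω̂) z‖)²` as `N → ∞`. -/
theorem squared_modulus_tendsto_besselJ0_sq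
    (ω ωh : ℝ) (hω : 0 < ω) (hωh : 0 < ωh)
    (x z : EuclideanSpace ℝ (Fin 2)) :
    Tendsto (fun N : ℕ =>
        (‖(1 / (N:ℂ)) * ∑ n ∈ Finset.range N,
          Complex.exp (Complex.I *
            (Real.cos (2 * π * (n + 1) / N) * (ωh * x 0 - ω * z 0) +
             Real.sin (2 * π * (n + 1) / N) * (ωh * x 1 - ω * z 1)))‖) ^ 2)
      atTop (nhds ((J0 (ωh * ‖x - (ω / ωh) • z‖)) ^ 2)) := by
  set A : ℝ := ωh * x 0 - ω * z 0 with hA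
  set B : ℝ := ωh * x 1 - ω * z 1 with hB
  set c : ℂ := (A : ℂ) + (B : ℂ) * Complex.I with hc
  set r : ℝ := ‖c‖ with hr
  set α : ℝ := Complex.arg c with hα
  have hcre : c.re = A := by simp [hc]
  have hcim : c.im = B := by simp [hc]
  have hAr : r * Real.cos α = A := by rw [hr, hα, Complex.norm_mul_cos_arg, hcre]
  have hBr : r * Real.sin α = B := by rw [hr, hα, Complex.norm_mul_sin_arg, hcim]
  set f : ℝ → ℂ := fun t => Complex.exp (Complex.I *
      (Complex.cos (t : ℂ) * (A : ℂ) + Complex.sin (t : ℂ) * (B : ℂ))) with hf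
  have hfc : Continuous f := by
    apply Complex.continuous_exp.comp
    continuity
  -- pointwise rewrite of f
  have hfeq : ∀ t : ℝ, f t = Complex.exp (Complex.I * ((r:ℂ) * (Real.cos (t - α) : ℂ))) := by
    intro t
    have : Real.cos t * A + Real.sin t * B = r * Real.cos (t - α) := by
      rw [Real.cos_sub, ← hAr, ← hBr]; ring
    simp only [hf]
    congr 2
    exact_mod_cast this
  -- value of the limit
  have hL : (2*π)⁻¹ • ∫ t in (0:ℝ)..(2*π), f t = ((J0 r : ℝ) : ℂ) := by
    have h1 : ∫ t in (0:ℝ)..(2*π), f t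
        = ∫ t in (0:ℝ)..(2*π), Complex.exp (Complex.I * ((r:ℂ) * (Real.cos (t - α) : ℂ))) := by
      exact intervalIntegral.integral_congr (fun t _ => hfeq t)
    rw [h1, shift_int r α, exp_int_eq r, J0]
    rw [Complex.real_smul]
    push_cast
    ring
  have hlim := riemann_sum_tendsto f hfc
  rw [hL] at hlim
  -- identify r with the norm expression
  have hrR : r = ωh * ‖x - (ω / ωh) • z‖ := by
    have h1 : r = Real.sqrt (A^2 + B^2) := by
      rw [hr, hc, Complex.norm_def, Complex.normSq_apply]
      simp
      ring_nf
    rw [h1, EuclideanSpace.norm_eq]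
    simp only [Fin.sum_univ_two, PiLp.sub_apply, PiLp.smul_apply, smul_eq_mul,
      Real.norm_eq_abs, sq_abs]
    rw [show A^2 + B^2 = ωh^2 * ((x 0 - ω/ωh * z 0)^2 + (x 1 - ω/ωh * z 1)^2) by
      rw [hA, hB]; field_simp]
    rw [Real.sqrt_mul (sq_nonneg ωh), Real.sqrt_sq hωh.le]
  rw [← hrR]
  -- pass to squared modulus
  have habs : Tendsto (fun N : ℕ =>
      (‖(N:ℝ)⁻¹ • ∑ n ∈ Finset.range N, f (2 * π * (n + 1) / N)‖) ^ 2)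
      atTop (nhds ((‖((J0 r : ℝ) : ℂ)‖) ^ 2)) := by
    exact (hlim.norm.pow 2)
  have hval : (‖((J0 r : ℝ) : ℂ)‖) ^ 2 = (J0 r) ^ 2 := by
    rw [Complex.norm_real, Real.norm_eq_abs, sq_abs]
  rw [hval] at habs
  refine habs.congr fun N => ?_
  have h1 : ((((N:ℝ))⁻¹ : ℝ) : ℂ) = ((N:ℂ))⁻¹ := by push_cast; ring
  congr 2
  rw [Complex.real_smul, h1, ← one_div]
  congr 1
  refine Finset.sum_congr rfl fun n _ => ?_
  simp only [hf]
  congr 1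
  simp only [hA, hB]
  push_cast
  ring
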